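/- For every n > 2, the set of triples (m, i, j) of integers with m ≥ 2, (n − 1) ∣ (m − 1), 1 ≤ i < j ≤ m, i ≤ n, j − i ≤ n, m − j < n, and additionally (j − i = n or m = n), is finite and has exactly (n² + n + 2)/2 elements (equivalently, twice its cardinality equals n² + n + 2). -/
import Mathlib


/-- The set of triples `(m, i, j)` such that `A_{i,j}` is an `n`-irreducible
band generator of the pure braid group on `m` strands satisfying additionally
`j - i = n` or `m = n`, where `m` is a possible number of leaves of a full
`n`-ary tree. -/
def nIrreducibleSpecialTriples (n : ℕ) : Set (ℤ × ℤ × ℤ) :=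
  {t | 2 ≤ t.1 ∧ ((n : ℤ) - 1) ∣ (t.1 - 1) ∧ 1 ≤ t.2.1 ∧ t.2.1 < t.2.2 ∧
    t.2.2 ≤ t.1 ∧ t.2.1 ≤ (n : ℤ) ∧ t.2.2 - t.2.1 ≤ (n : ℤ) ∧
    t.1 - t.2.2 < (n : ℤ) ∧ (t.2.2 - t.2.1 = (n : ℤ) ∨ t.1 = (n : ℤ))}

/-- Pairs `(i, j)` of naturals with `i < j < n`. -/
def auxPairs (n : ℕ) : Finset (ℕ × ℕ) :=
  (Finset.range n).biUnion fun j => (Finset.range j).image fun i => (i, j)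

lemma mem_auxPairs {n : ℕ} {p : ℕ × ℕ} :
    p ∈ auxPairs n ↔ p.1 < p.2 ∧ p.2 < n := by
  obtain ⟨a, b⟩ := p
  simp only [auxPairs, Finset.mem_biUnion, Finset.mem_range, Finset.mem_image,
    Prod.mk.injEq]
  constructor
  · rintro ⟨j, hj, i, hi, rfl, rfl⟩
    exact ⟨hi, hj⟩
  · rintro ⟨h1, h2⟩
    exact ⟨b, h2, a, h1, rfl, rfl⟩

lemma card_auxPairs (n : ℕ) : (auxPairs n).card = ∑ j ∈ Finset.range n, j := by
  rw [auxPairs, Finset.card_biUnion]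
  · refine Finset.sum_congr rfl fun j _ => ?_
    rw [Finset.card_image_of_injective _ (fun a b h => by
      simpa using congrArg Prod.fst h)]
    exact Finset.card_range j
  · intro a _ b _ hab
    simp only [Finset.disjoint_left, Finset.mem_image, Finset.mem_range]
    rintro ⟨x, y⟩ ⟨i, hi, h⟩ ⟨i', hi', h'⟩
    apply hab
    have := congrArg Prod.snd h
    have := congrArg Prod.snd h'
    simp_all

/-- The explicit finite set of special triples. -/
def auxTriples (n : ℕ) : Finset (ℤ × ℤ × ℤ) :=
  (auxPairs n).image (fun p => ((n : ℤ), (p.1 : ℤ) + 1, (p.2 : ℤ) + 1)) ∪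
  ((Finset.range (n - 1)).image
    (fun i : ℕ => (2 * (n : ℤ) - 1, (i : ℤ) + 1, (i : ℤ) + 1 + (n : ℤ)))) ∪
  {(3 * (n : ℤ) - 2, (n : ℤ) - 1, 2 * (n : ℤ) - 1),
   (3 * (n : ℤ) - 2, (n : ℤ), 2 * (n : ℤ))}

lemma mem_auxTriples (n : ℕ) (hn : 2 < n) (t : ℤ × ℤ × ℤ) :
    t ∈ nIrreducibleSpecialTriples n ↔ t ∈ auxTriples n := by
  obtain ⟨m, i, j⟩ := t
  simp only [nIrreducibleSpecialTriples, Set.mem_setOf_eq, auxTriples,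
    Finset.mem_union, Finset.mem_image, Finset.mem_insert, Finset.mem_singleton,
    Finset.mem_range, mem_auxPairs, Prod.mk.injEq]
  constructor
  · rintro ⟨hm2, ⟨k, hk⟩, h1i, hij, hjm, hin, hji, hmj, hcase⟩
    rcases hcase with hji' | hm
    · -- case `j - i = n`
      have h2k : 2 ≤ k := by
        by_contra h
        push_neg at h
        have : ((n : ℤ) - 1) * k ≤ ((n : ℤ) - 1) * 1 :=
          mul_le_mul_of_nonneg_left (by omega) (by omega)
        omega
      have hk3 : k ≤ 3 := by
        by_contra h
        push_neg at h
        have : ((n : ℤ) - 1) * 4 ≤ ((n : ℤ) - 1) * k :=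
          mul_le_mul_of_nonneg_left (by omega) (by omega)
        omega
      have hk23 : k = 2 ∨ k = 3 := by omega
      rcases hk23 with rfl | rfl
      · refine Or.inl (Or.inr ⟨(i - 1).toNat, ?_, ?_, ?_, ?_⟩) <;> omega
      · refine Or.inr ?_
        omega
    · -- case `m = n`
      refine Or.inl (Or.inl ⟨⟨(i - 1).toNat, (j - 1).toNat⟩, ⟨?_, ?_⟩, ?_, ?_, ?_⟩) <;>
        omega
  · rintro ((⟨⟨a, b⟩, ⟨hab, hbn⟩, hm, hi, hj⟩ | ⟨a, ha, hm, hi, hj⟩) |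
      (⟨hm, hi, hj⟩ | ⟨hm, hi, hj⟩))
    · exact ⟨by omega, ⟨1, by omega⟩, by omega, by omega, by omega, by omega,
        by omega, by omega, Or.inr (by omega)⟩
    · exact ⟨by omega, ⟨2, by omega⟩, by omega, by omega, by omega, by omega,
        by omega, by omega, Or.inl (by omega)⟩
    · exact ⟨by omega, ⟨3, by omega⟩, by omega, by omega, by omega, by omega,
        by omega, by omega, Or.inl (by omega)⟩
    · exact ⟨by omega, ⟨3, by omega⟩, by omega, by omega, by omega, by omega,
        by omega, by omega, Or.inl (by omega)⟩

lemma card_auxTriples (n : ℕ) (hn : 2 < n) :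
    2 * (auxTriples n).card = n ^ 2 + n + 2 := by
  have hsum := Finset.sum_range_id_mul_two n
  rw [auxTriples]
  rw [Finset.card_union_of_disjoint, Finset.card_union_of_disjoint]
  · rw [Finset.card_image_of_injective _ (fun p q h => by
        have h1 := congrArg (fun x => x.2.1) h
        have h2 := congrArg (fun x => x.2.2) h
        simp only at h1 h2
        have : p.1 = q.1 ∧ p.2 = q.2 := by omega
        exact Prod.ext this.1 this.2)]
    rw [Finset.card_image_of_injective _ (fun p q h => by
        have h1 := congrArg (fun x => x.2.1) h
        simp only at h1
        omega)]
    rw [card_auxPairs, Finset.card_range]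
    rw [Finset.card_insert_of_notMem (by
      simp only [Finset.mem_singleton, Prod.mk.injEq]
      omega), Finset.card_singleton]
    obtain ⟨q, rfl⟩ : ∃ q, n = q + 3 := ⟨n - 3, by omega⟩
    simp only [show q + 3 - 1 = q + 2 from by omega] at hsum ⊢
    ring_nf at hsum ⊢
    linarith
  · -- first two parts disjoint (first coord `n` vs `2n-1`)
    rw [Finset.disjoint_left]
    rintro ⟨m, i, j⟩ h1 h2
    simp only [Finset.mem_image, Finset.mem_range, mem_auxPairs,
      Prod.mk.injEq] at h1 h2
    obtain ⟨p, hp, e1, e2, e3⟩ := h1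
    obtain ⟨a, ha, f1, f2, f3⟩ := h2
    omega
  · -- union of first two disjoint from the pair
    rw [Finset.disjoint_left]
    rintro ⟨m, i, j⟩ h1 h2
    simp only [Finset.mem_union, Finset.mem_image, Finset.mem_range,
      mem_auxPairs, Finset.mem_insert, Finset.mem_singleton, Prod.mk.injEq] at h1 h2
    rcases h1 with ⟨p, hp, e1, e2, e3⟩ | ⟨a, ha, e1, e2, e3⟩ <;>
      rcases h2 with ⟨f1, f2, f3⟩ | ⟨f1, f2, f3⟩ <;> omega

theorem card_nIrreducibleSpecialTriples (n : ℕ) (hn : 2 < n) :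
    (nIrreducibleSpecialTriples n).Finite ∧
      2 * (nIrreducibleSpecialTriples n).ncard = n ^ 2 + n + 2 := by
  have hset : nIrreducibleSpecialTriples n = ↑(auxTriples n) := by
    ext t
    rw [mem_auxTriples n hn t, Finset.mem_coe]
  rw [hset]
  exact ⟨(auxTriples n).finite_toSet, by rw [Set.ncard_coe_finset]; exact card_auxTriples n hn⟩
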